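/- Let H be a strictly 2-balanced graph with δ(H) ≥ 2 and m₂(H) − ⌊m₂(H)⌋ ≤ 1/2, let H⃗ be an anti-directed orientation of H, and let G be a graph with m(G) < m₂(H). Then some orientation of G contains no copy of H⃗. -/

import Mathlib

open Finset

/-- An orientation of a simple graph `G`: an assignment of a direction to each edge. -/
structure GraphOrientation {V : Type*} (G : SimpleGraph V) where
  adj : V → V → Prop
  le : ∀ {u v}, adj u v → G.Adj u v
  total : ∀ {u v}, G.Adj u v → adj u v ∨ adj v u
  asymm : ∀ {u v}, adj u v → ¬ adj v u

section Aux

variable {V : Type*} [Fintype V] [DecidableEq V]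

/-- Degeneracy ordering: if every nonempty vertex subset contains a vertex with at most `d`
neighbours inside it, then there is an injective ranking such that every vertex has at most
`d` neighbours of smaller rank. -/
private lemma exists_rank (G : SimpleGraph V) [DecidableRel G.Adj] (d : ℕ)
    (hdeg : ∀ A : Finset V, A.Nonempty → ∃ x ∈ A, #(G.neighborFinset x ∩ A) ≤ d) :
    ∃ r : V → ℕ, Function.Injective r ∧
      ∀ v, #((G.neighborFinset v).filter fun u => r u < r v) ≤ d := by
  suffices h : ∀ n (A : Finset V), #A = n → ∃ r : V → ℕ, Set.InjOn r ↑A ∧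
      ∀ v ∈ A, #((G.neighborFinset v).filter fun u => u ∈ A ∧ r u < r v) ≤ d by
    obtain ⟨r, hinj, hr⟩ := h _ univ rfl
    refine ⟨r, fun x y hxy => hinj (by simp) (by simp) hxy, fun v => ?_⟩
    have := hr v (mem_univ v)
    simpa using this
  intro n
  induction n with
  | zero =>
    intro A hA
    refine ⟨fun _ => 0, ?_, ?_⟩ <;> simp [card_eq_zero.mp hA]
  | succ n ih =>
    intro A hA
    have hAne : A.Nonempty := card_pos.mp (by omega)
    obtain ⟨x, hx, hdx⟩ := hdeg A hAne
    obtain ⟨r, hinj, hr⟩ := ih (A.erase x) (by rw [card_erase_of_mem hx]; omega)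
    set M : ℕ := (A.erase x).sup r + 1 with hM
    refine ⟨fun v => if v = x then M else r v, ?_, ?_⟩
    · intro u hu v hv huv
      by_cases hux : u = x <;> by_cases hvx : v = x
      · rw [hux, hvx]
      · exfalso
        subst hux
        have hvA : v ∈ A.erase u := mem_erase.mpr ⟨hvx, hv⟩
        have : r v ≤ (A.erase u).sup r := le_sup hvA
        simp only [eq_self_iff_true, if_true, if_neg hvx] at huv
        omega
      · exfalso
        subst hvx
        have huA : u ∈ A.erase v := mem_erase.mpr ⟨hux, hu⟩
        have : r u ≤ (A.erase v).sup r := le_sup huA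
        simp only [eq_self_iff_true, if_true, if_neg hux] at huv
        omega
      · simp only [if_neg hux, if_neg hvx] at huv
        exact hinj (mem_coe.mpr (mem_erase.mpr ⟨hux, hu⟩)) (mem_coe.mpr (mem_erase.mpr ⟨hvx, hv⟩)) huv
    · intro v hv
      by_cases hvx : v = x
      · subst hvx
        refine le_trans (card_le_card ?_) hdx
        intro u hu
        simp only [mem_filter] at hu
        exact mem_inter.mpr ⟨hu.1, hu.2.1⟩
      · have hvA : v ∈ A.erase x := mem_erase.mpr ⟨hvx, hv⟩
        refine le_trans (card_le_card ?_) (hr v hvA)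
        intro u hu
        simp only [mem_filter, if_neg hvx] at hu ⊢
        obtain ⟨hunb, huA, hlt⟩ := hu
        by_cases hux : u = x
        · exfalso
          rw [if_pos hux] at hlt
          have : r v ≤ (A.erase x).sup r := le_sup hvA
          omega
        · rw [if_neg hux] at hlt
          exact ⟨hunb, mem_erase.mpr ⟨hux, huA⟩, hlt⟩

private lemma exists_split (B : Finset V) (a b : ℕ) (hB : #B ≤ a + b) :
    ∃ O, O ⊆ B ∧ #O ≤ a ∧ #(B \ O) ≤ b := by
  rcases le_or_gt #B a with hle | hlt
  · exact ⟨B, Finset.Subset.refl B, hle, by simp⟩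
  · obtain ⟨O, hsub, hcard⟩ := exists_subset_card_eq hlt.le
    refine ⟨O, hsub, hcard.le, ?_⟩
    rw [card_sdiff_of_subset hsub, hcard]
    omega

end Aux

set_option maxHeartbeats 1000000

theorem antidirected_not_oriented_ramsey_of_m2 {V W : Type*} [Fintype V] [Fintype W]
    (H : SimpleGraph W) [DecidableRel H.Adj] (G : SimpleGraph V)
    (hcard : 3 ≤ Fintype.card W)
    (hbal : ∀ F : H.Subgraph, F ≠ ⊤ → 3 ≤ F.verts.ncard →
      ((F.edgeSet.ncard : ℚ) - 1) / ((F.verts.ncard : ℚ) - 2) <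
        ((H.edgeFinset.card : ℚ) - 1) / ((Fintype.card W : ℚ) - 2))
    (hδ : 2 ≤ H.minDegree)
    (hfrac : ((H.edgeFinset.card : ℚ) - 1) / ((Fintype.card W : ℚ) - 2) -
        (⌊((H.edgeFinset.card : ℚ) - 1) / ((Fintype.card W : ℚ) - 2)⌋ : ℚ) ≤ 1/2)
    (h : GraphOrientation H)
    (hanti : ∀ v : W, (∀ u, ¬ h.adj u v) ∨ (∀ u, ¬ h.adj v u))
    (hm : ∀ J : G.Subgraph, J.verts.Nonempty →
      (J.edgeSet.ncard : ℚ) <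
        (((H.edgeFinset.card : ℚ) - 1) / ((Fintype.card W : ℚ) - 2)) * J.verts.ncard) :
    ∃ o : GraphOrientation G, ¬ ∃ f : W → V, Function.Injective f ∧
      ∀ a b, h.adj a b → o.adj (f a) (f b) := by
  letI : DecidableEq V := Classical.decEq V
  letI : DecidableEq W := Classical.decEq W
  letI : DecidableRel G.Adj := Classical.decRel _
  letI : DecidablePred (fun w : W => ∀ u, ¬ h.adj u w) := fun w => Classical.propDecidable _
  have hW : Nonempty W := Fintype.card_pos_iff.mp (by omega)
  set vH : ℕ := Fintype.card W with hvH
  set eH : ℕ := H.edgeFinset.card with heH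
  set ρ : ℚ := ((eH : ℚ) - 1) / ((vH : ℚ) - 2) with hρdef
  have hv2 : (0:ℚ) < (vH:ℚ) - 2 := by
    have h3 : (3:ℚ) ≤ (vH:ℚ) := by exact_mod_cast hcard
    linarith
  have hdeg2 : ∀ w : W, 2 ≤ H.degree w := fun w => le_trans hδ (H.minDegree_le_degree w)
  have hsumdeg : ∑ w, H.degree w = 2 * eH := H.sum_degrees_eq_twice_card_edges
  have heHvH : vH ≤ eH := by
    have h1 : 2 * vH ≤ ∑ w, H.degree w := by
      calc 2 * vH = ∑ _w : W, 2 := by rw [Finset.sum_const, smul_eq_mul, mul_comm]; rfl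
        _ ≤ ∑ w, H.degree w := Finset.sum_le_sum (fun w _ => hdeg2 w)
    omega
  have hρeq : (eH:ℚ) - 1 = ρ * ((vH:ℚ) - 2) := (div_mul_cancel₀ _ (ne_of_gt hv2)).symm
  have hρ1 : 1 < ρ := by
    rw [hρdef, lt_div_iff₀ hv2]
    have hvh : (vH:ℚ) ≤ (eH:ℚ) := by exact_mod_cast heHvH
    linarith
  have hfl1 : 1 ≤ ⌊ρ⌋ := Int.le_floor.mpr (by exact_mod_cast hρ1.le)
  have hcl2 : 2 ≤ ⌈ρ⌉ := by
    have h1 : (1:ℤ) < ⌈ρ⌉ := Int.lt_ceil.mpr (by exact_mod_cast hρ1)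
    omega
  set aN : ℕ := (⌊ρ⌋).toNat with haN
  set bN : ℕ := (⌈ρ⌉ - 1).toNat with hbN
  have haZ : (aN:ℤ) = ⌊ρ⌋ := Int.toNat_of_nonneg (by omega)
  have hbZ : (bN:ℤ) = ⌈ρ⌉ - 1 := Int.toNat_of_nonneg (by omega)
  have haQ : (aN:ℚ) = (⌊ρ⌋:ℚ) := by exact_mod_cast haZ
  have hbQ : (bN:ℚ) = (⌈ρ⌉:ℚ) - 1 := by exact_mod_cast hbZ
  have hflQ : (⌊ρ⌋:ℚ) ≤ ρ := Int.floor_le ρ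
  have hclQ : ρ ≤ (⌈ρ⌉:ℚ) := Int.le_ceil ρ
  have habN : bN ≤ aN := by
    have := Int.ceil_le_floor_add_one ρ
    omega
  have h2ρ : 2 * ρ ≤ (aN:ℚ) + (bN:ℚ) + 1 := by
    rw [haQ, hbQ]
    by_cases hint : (⌊ρ⌋:ℚ) = ρ
    · have hc : ⌈ρ⌉ = ⌊ρ⌋ := by rw [← hint]; exact Int.ceil_intCast _
      have hcQ : (⌈ρ⌉:ℚ) = (⌊ρ⌋:ℚ) := by exact_mod_cast hc
      linarith
    · have h1 : (⌊ρ⌋:ℚ) < ρ := lt_of_le_of_ne hflQ hint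
      have h2 : (⌊ρ⌋:ℚ) < (⌈ρ⌉:ℚ) := lt_of_lt_of_le h1 hclQ
      have h3 : ⌊ρ⌋ < ⌈ρ⌉ := by exact_mod_cast h2
      have h4 : ((⌊ρ⌋:ℚ)) + 1 ≤ (⌈ρ⌉:ℚ) := by exact_mod_cast h3
      linarith [hfrac]
  -- degeneracy bound for G
  have hdegG : ∀ A : Finset V, A.Nonempty → ∃ x ∈ A, #(G.neighborFinset x ∩ A) ≤ aN + bN := by
    intro A hA
    by_contra hcon
    push_neg at hcon
    set G' : SimpleGraph V :=
      { Adj := fun x y => G.Adj x y ∧ x ∈ A ∧ y ∈ A,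
        symm := ⟨fun x y hxy => ⟨hxy.1.symm, hxy.2.2, hxy.2.1⟩⟩,
        loopless := ⟨fun x hx => G.loopless.irrefl x hx.1⟩ } with hG'
    letI : DecidableRel G'.Adj := fun x y =>
      decidable_of_iff (G.Adj x y ∧ x ∈ A ∧ y ∈ A) Iff.rfl
    have hnb : ∀ x ∈ A, G'.neighborFinset x = G.neighborFinset x ∩ A := by
      intro x hx
      ext y
      simp only [SimpleGraph.mem_neighborFinset, Finset.mem_inter]
      constructor
      · rintro ⟨h1, _, h3⟩; exact ⟨h1, h3⟩
      · rintro ⟨h1, h2⟩; exact ⟨h1, hx, h2⟩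
    have hdegeq : ∀ x ∈ A, G'.degree x = #(G.neighborFinset x ∩ A) := fun x hx => by
      rw [← SimpleGraph.card_neighborFinset_eq_degree, hnb x hx]
    have hdeg0 : ∀ x, x ∉ A → G'.degree x = 0 := by
      intro x hx
      rw [← SimpleGraph.card_neighborFinset_eq_degree, Finset.card_eq_zero]
      ext y
      simp only [SimpleGraph.mem_neighborFinset, Finset.notMem_empty, iff_false]
      rintro ⟨-, h2, -⟩; exact hx h2
    have hsum : ∑ x ∈ A, G'.degree x = 2 * #G'.edgeFinset := by
      rw [← SimpleGraph.sum_degrees_eq_twice_card_edges]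
      exact Finset.sum_subset (Finset.subset_univ A) (fun x _ hx => hdeg0 x hx)
    have hlb : (aN + bN + 1) * #A ≤ 2 * #G'.edgeFinset := by
      rw [← hsum]
      calc (aN + bN + 1) * #A = ∑ _x ∈ A, (aN + bN + 1) := by
            rw [Finset.sum_const, smul_eq_mul, mul_comm]
        _ ≤ ∑ x ∈ A, G'.degree x :=
            Finset.sum_le_sum (fun x hx => by rw [hdegeq x hx]; exact hcon x hx)
    set J : G.Subgraph :=
      { verts := ↑A, Adj := G'.Adj,
        adj_sub := fun hxy => hxy.1,
        edge_vert := fun hxy => Finset.mem_coe.mpr hxy.2.1,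
        symm := G'.symm } with hJ
    have hJv : J.verts.ncard = #A := Set.ncard_coe_finset A
    have hJe : J.edgeSet = G'.edgeSet := by
      ext e
      refine Sym2.ind (fun x y => ?_) e
      rw [SimpleGraph.Subgraph.mem_edgeSet, SimpleGraph.mem_edgeSet]
    have hJcard : (J.edgeSet.ncard : ℚ) = (#G'.edgeFinset : ℚ) := by
      rw [hJe]
      norm_cast
      rw [Set.ncard_eq_toFinset_card', Set.toFinset_card]
      convert (G'.edgeFinset_card).symm
    obtain ⟨x0, hx0⟩ := hA
    have hmJ := hm J ⟨x0, Finset.mem_coe.mpr hx0⟩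
    rw [hJv] at hmJ
    rw [hJcard] at hmJ
    have hApos : 0 < #A := Finset.card_pos.mpr ⟨x0, hx0⟩
    have hxQ : (0:ℚ) < (#A:ℚ) := by exact_mod_cast hApos
    have hc1 : ((aN:ℚ) + (bN:ℚ) + 1) * (#A:ℚ) ≤ 2 * (#G'.edgeFinset:ℚ) := by
      exact_mod_cast hlb
    nlinarith [mul_le_mul_of_nonneg_right h2ρ hxQ.le]
  obtain ⟨rank, hrinj, hrback⟩ := exists_rank G (aN + bN) hdegG
  set Bk : V → Finset V := fun v => (G.neighborFinset v).filter fun u => rank u < rank v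
    with hBk
  have hsplit : ∀ v, ∃ O, O ⊆ Bk v ∧ #O ≤ aN ∧ #(Bk v \ O) ≤ bN :=
    fun v => exists_split (Bk v) aN bN (hrback v)
  choose Out hOsub hOcard hIcard using hsplit
  refine ⟨⟨fun x y => G.Adj x y ∧
      ((rank y < rank x ∧ y ∈ Out x) ∨ (rank x < rank y ∧ x ∈ Bk y \ Out y)),
      fun hxy => hxy.1, ?_, ?_⟩, ?_⟩
  · -- total
    intro u v huv
    rcases lt_trichotomy (rank u) (rank v) with hlt | heq | hgt
    · have hmem : u ∈ Bk v := by
        rw [hBk]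
        simp only [Finset.mem_filter, SimpleGraph.mem_neighborFinset]
        exact ⟨huv.symm, hlt⟩
      by_cases hO : u ∈ Out v
      · exact Or.inr ⟨huv.symm, Or.inl ⟨hlt, hO⟩⟩
      · exact Or.inl ⟨huv, Or.inr ⟨hlt, Finset.mem_sdiff.mpr ⟨hmem, hO⟩⟩⟩
    · exact absurd (hrinj heq) huv.ne
    · have hmem : v ∈ Bk u := by
        rw [hBk]
        simp only [Finset.mem_filter, SimpleGraph.mem_neighborFinset]
        exact ⟨huv, hgt⟩
      by_cases hO : v ∈ Out u
      · exact Or.inl ⟨huv, Or.inl ⟨hgt, hO⟩⟩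
      · exact Or.inr ⟨huv.symm, Or.inr ⟨hgt, Finset.mem_sdiff.mpr ⟨hmem, hO⟩⟩⟩
  · -- asymm
    rintro u v ⟨-, h1⟩ ⟨-, h2⟩
    rcases h1 with ⟨hlt1, hm1⟩ | ⟨hlt1, hm1⟩ <;> rcases h2 with ⟨hlt2, hm2⟩ | ⟨hlt2, hm2⟩
    · exact absurd hlt2 (lt_asymm hlt1)
    · exact absurd hm1 (Finset.mem_sdiff.mp hm2).2
    · exact absurd hm2 (Finset.mem_sdiff.mp hm1).2
    · exact absurd hlt2 (lt_asymm hlt1)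
  -- no copy
  rintro ⟨f, finj, hcopy⟩
  set pos : W → ℕ := fun w => rank (f w) with hpos
  have hposinj : Function.Injective pos := fun x y hxy => finj (hrinj hxy)
  set S : Finset W := univ.filter (fun w => ∀ u, ¬ h.adj u w) with hS
  have hSin : ∀ w ∈ S, ∀ u, ¬ h.adj u w := by
    intro w hw
    exact (Finset.mem_filter.mp hw).2
  have hTout : ∀ w, w ∉ S → ∀ u, ¬ h.adj w u := by
    intro w hw
    have hni : ¬ ∀ u, ¬ h.adj u w := by
      intro hcon
      exact hw (Finset.mem_filter.mpr ⟨mem_univ w, hcon⟩)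
    rcases hanti w with h1 | h2
    · exact absurd h1 hni
    · exact h2
  have hbipS : ∀ {x y}, H.Adj x y → x ∈ S → y ∉ S := by
    intro x y hxy hx hy
    rcases h.total hxy with ha | ha
    · exact hSin y hy x ha
    · exact hSin x hx y ha
  have hbipT : ∀ {x y}, H.Adj x y → x ∉ S → y ∈ S := by
    intro x y hxy hx
    by_contra hy
    rcases h.total hxy with ha | ha
    · exact hTout x hx y ha
    · exact hTout y hy x ha
  -- fibre cardinalities equal degrees
  have hfiberdeg : ∀ (Q : Finset (W × W)) (w : W),
      (∀ p, p ∈ Q ↔ H.Adj p.1 p.2 ∧ p.1 = w) → #Q = H.degree w := by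
    intro Q w hQ
    rw [← SimpleGraph.card_neighborFinset_eq_degree]
    refine Finset.card_bij (fun p _ => p.2) ?_ ?_ ?_
    · intro p hp
      obtain ⟨hadj, h1⟩ := (hQ p).mp hp
      rw [SimpleGraph.mem_neighborFinset, ← h1]
      exact hadj
    · intro p hp q hq hpq
      obtain ⟨-, h1⟩ := (hQ p).mp hp
      obtain ⟨-, h2⟩ := (hQ q).mp hq
      exact Prod.ext (h1.trans h2.symm) hpq
    · intro u hu
      refine ⟨(w, u), (hQ _).mpr ⟨?_, rfl⟩, rfl⟩
      rwa [SimpleGraph.mem_neighborFinset] at hu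
  set A2 : Finset (W × W) := univ.filter (fun p => H.Adj p.1 p.2) with hA2
  have hA2card : #A2 = 2 * eH := by
    rw [Finset.card_eq_sum_card_fiberwise (f := fun p : W × W => p.1) (t := univ)
      (fun p _ => mem_univ _), ← hsumdeg]
    refine Finset.sum_congr rfl (fun w _ => hfiberdeg _ w ?_)
    intro p
    simp only [hA2, Finset.mem_filter, Finset.mem_univ, true_and]
  -- sum of degrees over S equals eH
  set QS : Finset (W × W) := A2.filter (fun p => p.1 ∈ S) with hQS
  have hQScard : #QS = eH := by
    have hsplitQ : #QS + #(A2.filter (fun p => ¬ p.1 ∈ S)) = #A2 :=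
      Finset.card_filter_add_card_filter_not _
    have hswap : #(A2.filter (fun p => ¬ p.1 ∈ S)) = #QS := by
      refine Finset.card_nbij' (fun p => (p.2, p.1)) (fun p => (p.2, p.1)) ?_ ?_ ?_ ?_
      · intro p hp
        obtain ⟨hpA, hp1⟩ := Finset.mem_filter.mp hp
        obtain hadj := (Finset.mem_filter.mp hpA).2
        exact Finset.mem_filter.mpr ⟨Finset.mem_filter.mpr ⟨mem_univ _, hadj.symm⟩,
          hbipT hadj hp1⟩
      · intro p hp
        obtain ⟨hpA, hp1⟩ := Finset.mem_filter.mp hp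
        obtain hadj := (Finset.mem_filter.mp hpA).2
        exact Finset.mem_filter.mpr ⟨Finset.mem_filter.mpr ⟨mem_univ _, hadj.symm⟩,
          hbipS hadj hp1⟩
      · intro p _; rfl
      · intro p _; rfl
    omega
  have hsumS : ∑ w ∈ S, H.degree w = eH := by
    rw [← hQScard]
    rw [Finset.card_eq_sum_card_fiberwise (f := fun p : W × W => p.1) (s := QS) (t := S)
      (fun p hp => (Finset.mem_filter.mp hp).2)]
    refine Finset.sum_congr rfl (fun w hw => (hfiberdeg _ w ?_).symm)
    intro p
    constructor
    · intro hp
      obtain ⟨hpQ, h1⟩ := Finset.mem_filter.mp hp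
      obtain ⟨hpA, -⟩ := Finset.mem_filter.mp hpQ
      exact ⟨(Finset.mem_filter.mp hpA).2, h1⟩
    · rintro ⟨hadj, h1⟩
      exact Finset.mem_filter.mpr ⟨Finset.mem_filter.mpr
        ⟨Finset.mem_filter.mpr ⟨mem_univ _, hadj⟩, by simpa [h1] using hw⟩, h1⟩
  -- the pair count for the copy
  set P : Finset (W × W) := univ.filter (fun p => H.Adj p.1 p.2 ∧ pos p.2 < pos p.1) with hP
  set P' : Finset (W × W) := univ.filter (fun p => H.Adj p.1 p.2 ∧ pos p.1 < pos p.2) with hP'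
  have hPcard : #P = eH := by
    have hswap : #P = #P' := by
      refine Finset.card_nbij' (fun p => (p.2, p.1)) (fun p => (p.2, p.1)) ?_ ?_ ?_ ?_
      · intro p hp
        obtain ⟨-, hadj, hlt⟩ := Finset.mem_filter.mp hp
        exact Finset.mem_filter.mpr ⟨mem_univ _, hadj.symm, hlt⟩
      · intro p hp
        obtain ⟨-, hadj, hlt⟩ := Finset.mem_filter.mp hp
        exact Finset.mem_filter.mpr ⟨mem_univ _, hadj.symm, hlt⟩
      · intro p _; rfl
      · intro p _; rfl
    have hdisj : Disjoint P P' := by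
      rw [Finset.disjoint_left]
      intro p hp hp'
      exact absurd (Finset.mem_filter.mp hp').2.2 (lt_asymm (Finset.mem_filter.mp hp).2.2)
    have hunion : P ∪ P' = A2 := by
      ext p
      simp only [hP, hP', hA2, Finset.mem_union, Finset.mem_filter, Finset.mem_univ, true_and]
      constructor
      · rintro (⟨h1, -⟩ | ⟨h1, -⟩) <;> exact h1
      · intro hadj
        have hne : pos p.1 ≠ pos p.2 := fun hEq => hadj.ne (hposinj hEq)
        rcases lt_or_gt_of_ne hne with hlt | hgt
        · exact Or.inr ⟨hadj, hlt⟩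
        · exact Or.inl ⟨hadj, hgt⟩
    have hcu : #(P ∪ P') = #P + #P' := Finset.card_union_of_disjoint hdisj
    rw [hunion, hA2card] at hcu
    omega
  set β : W → ℕ := fun w => #(P.filter (fun p => p.1 = w)) with hβ
  have hsumβ : ∑ w, β w = eH := by
    rw [← hPcard]
    exact (Finset.card_eq_sum_card_fiberwise (f := fun p : W × W => p.1) (t := univ)
      (fun p _ => mem_univ _)).symm
  have hβS : ∀ w ∈ S, β w ≤ aN := by
    intro w hw
    refine le_trans (Finset.card_le_card_of_injOn (fun p => f p.2) ?_ ?_) (hOcard (f w))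
    · intro p hp
      obtain ⟨hpP, hp1⟩ := Finset.mem_filter.mp hp
      obtain ⟨-, hadj, hlt⟩ := Finset.mem_filter.mp hpP
      have hadj' : h.adj p.1 p.2 := by
        rcases h.total hadj with ha | ha
        · exact ha
        · exact absurd ha (hSin p.1 (by rw [hp1]; exact hw) p.2)
      obtain ⟨-, hor⟩ := hcopy _ _ hadj'
      rcases hor with ⟨hlt2, hmem⟩ | ⟨hlt2, hmem⟩
      · rw [← hp1]; exact hmem
      · exfalso
        have hlt3 : rank (f p.2) < rank (f p.1) := hlt
        omega
    · intro p hp q hq hpq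
      have h1 : p.1 = w := (Finset.mem_filter.mp hp).2
      have h2 : q.1 = w := (Finset.mem_filter.mp hq).2
      exact Prod.ext (h1.trans h2.symm) (finj hpq)
  have hβT : ∀ w, w ∉ S → β w ≤ bN := by
    intro w hw
    refine le_trans (Finset.card_le_card_of_injOn (fun p => f p.2) ?_ ?_) (hIcard (f w))
    · intro p hp
      obtain ⟨hpP, hp1⟩ := Finset.mem_filter.mp hp
      obtain ⟨-, hadj, hlt⟩ := Finset.mem_filter.mp hpP
      have hadj' : h.adj p.2 p.1 := by
        rcases h.total hadj with ha | ha
        · exact absurd ha (by rw [hp1] at ha ⊢; exact hTout w hw p.2)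
        · exact ha
      obtain ⟨-, hor⟩ := hcopy _ _ hadj'
      rcases hor with ⟨hlt2, hmem⟩ | ⟨hlt2, hmem⟩
      · exfalso
        have hlt3 : rank (f p.2) < rank (f p.1) := hlt
        omega
      · rw [← hp1]; exact hmem
    · intro p hp q hq hpq
      have h1 : p.1 = w := (Finset.mem_filter.mp hp).2
      have h2 : q.1 = w := (Finset.mem_filter.mp hq).2
      exact Prod.ext (h1.trans h2.symm) (finj hpq)
  obtain ⟨w₁, -, hw₁⟩ := Finset.exists_min_image (univ : Finset W) pos
    ⟨Classical.arbitrary W, mem_univ _⟩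
  have herase_ne : (univ.erase w₁).Nonempty := by
    rw [← Finset.card_pos, Finset.card_erase_of_mem (mem_univ _), Finset.card_univ]
    omega
  obtain ⟨w₂, hw₂mem, hw₂⟩ := Finset.exists_min_image _ pos herase_ne
  have hw21 : w₂ ≠ w₁ := (Finset.mem_erase.mp hw₂mem).1
  have hβw₁ : β w₁ = 0 := by
    rw [hβ]
    rw [Finset.card_eq_zero, Finset.filter_eq_empty_iff]
    intro p hp hp1
    obtain ⟨-, -, hlt⟩ := Finset.mem_filter.mp hp
    rw [hp1] at hlt
    exact absurd hlt (not_lt.mpr (hw₁ p.2 (mem_univ _)))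
  have hβw₂ : β w₂ ≤ 1 := by
    rw [hβ]
    refine le_trans (Finset.card_le_card (t := {(w₂, w₁)}) ?_) (by simp)
    intro p hp
    obtain ⟨hpP, hp1⟩ := Finset.mem_filter.mp hp
    obtain ⟨-, -, hlt⟩ := Finset.mem_filter.mp hpP
    have hp2 : p.2 = w₁ := by
      by_contra hne
      have hmem : p.2 ∈ univ.erase w₁ := Finset.mem_erase.mpr ⟨hne, mem_univ _⟩
      have hle := hw₂ _ hmem
      rw [hp1] at hlt
      omega
    rw [Finset.mem_singleton]
    exact Prod.ext hp1 hp2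
  set cap : W → ℕ := fun w => if w ∈ S then aN else bN with hcap
  have hβcap : ∀ w, β w ≤ cap w := by
    intro w
    rw [hcap]
    by_cases hw : w ∈ S
    · simp only [if_pos hw]; exact hβS w hw
    · simp only [if_neg hw]; exact hβT w hw
  have hcapb : ∀ w, bN ≤ cap w := by
    intro w
    rw [hcap]
    by_cases hw : w ∈ S
    · simp only [if_pos hw]; exact habN
    · simp only [if_neg hw]
      exact le_rfl
  have hsumcap : ∑ w, cap w = aN * #S + bN * #Sᶜ := by
    have hfS : univ.filter (fun w => w ∈ S) = S := by ext w; simp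
    have hfT : univ.filter (fun w => ¬ w ∈ S) = Sᶜ := by
      ext w; simp [Finset.mem_compl]
    rw [hcap, Finset.sum_ite, Finset.sum_const, Finset.sum_const, hfS, hfT,
      smul_eq_mul, smul_eq_mul, mul_comm (#S), mul_comm (#Sᶜ)]
  have hMineq : eH + bN + bN ≤ aN * #S + bN * #Sᶜ + 1 := by
    have e1 : ∑ w ∈ (univ.erase w₁).erase w₂, β w + β w₂ = ∑ w ∈ univ.erase w₁, β w :=
      Finset.sum_erase_add _ _ hw₂mem
    have e2 : ∑ w ∈ univ.erase w₁, β w + β w₁ = ∑ w, β w :=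
      Finset.sum_erase_add _ _ (mem_univ _)
    have e3 : ∑ w ∈ (univ.erase w₁).erase w₂, cap w + cap w₂ = ∑ w ∈ univ.erase w₁, cap w :=
      Finset.sum_erase_add _ _ hw₂mem
    have e4 : ∑ w ∈ univ.erase w₁, cap w + cap w₁ = ∑ w, cap w :=
      Finset.sum_erase_add _ _ (mem_univ _)
    have e5 : ∑ w ∈ (univ.erase w₁).erase w₂, β w ≤ ∑ w ∈ (univ.erase w₁).erase w₂, cap w :=
      Finset.sum_le_sum (fun w _ => hβcap w)
    have e6 := hcapb w₁
    have e7 := hcapb w₂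
    omega
  have hst : #S + #Sᶜ = vH := Finset.card_add_card_compl S
  have hstQ : (#S:ℚ) + (#Sᶜ:ℚ) = (vH:ℚ) := by exact_mod_cast hst
  have haρ : (aN:ℚ) ≤ ρ := by rw [haQ]; exact hflQ
  rcases eq_or_lt_of_le haρ with hEq | hLt
  · -- ρ is an integer, ρ = aN
    have haN2 : 2 ≤ aN := by
      have h1 : (1:ℚ) < (aN:ℚ) := by rw [hEq]; exact hρ1
      have h2 : 1 < aN := by exact_mod_cast h1
      omega
    have hcN : ⌈ρ⌉ = (aN:ℤ) := by
      rw [← hEq]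
      exact_mod_cast Int.ceil_natCast aN
    have hbNN : bN + 1 = aN := by omega
    -- t ≤ 2
    have hMQ : (eH:ℚ) + (bN:ℚ) + (bN:ℚ) ≤ (aN:ℚ) * (#S:ℚ) + (bN:ℚ) * (#Sᶜ:ℚ) + 1 := by
      exact_mod_cast hMineq
    have hbQ' : (bN:ℚ) = (aN:ℚ) - 1 := by
      have : ((bN:ℚ)) + 1 = (aN:ℚ) := by exact_mod_cast hbNN
      linarith
    have hρeq' : (eH:ℚ) - 1 = (aN:ℚ) * ((vH:ℚ) - 2) := by rw [hEq]; exact hρeq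
    have hkey : (aN:ℚ) * (vH:ℚ) = (aN:ℚ) * (#S:ℚ) + (aN:ℚ) * (#Sᶜ:ℚ) := by
      rw [← hstQ]; ring
    have htle : #Sᶜ ≤ 2 := by
      by_contra hgt
      push_neg at hgt
      have htQ : (3:ℚ) ≤ (#Sᶜ:ℚ) := by exact_mod_cast hgt
      nlinarith
    -- S nonempty, t ≥ 2
    have hSne : S.Nonempty := by
      obtain ⟨w0⟩ := hW
      have hd := hdeg2 w0
      have hnb : (H.neighborFinset w0).Nonempty := by
        rw [← Finset.card_pos, SimpleGraph.card_neighborFinset_eq_degree]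
        omega
      obtain ⟨w', hw'⟩ := hnb
      have hadj : H.Adj w0 w' := by rwa [SimpleGraph.mem_neighborFinset] at hw'
      by_cases h0 : w0 ∈ S
      · exact ⟨w0, h0⟩
      · exact ⟨w', hbipT hadj h0⟩
    obtain ⟨s₀, hs₀⟩ := hSne
    have hnbr_sub : ∀ w ∈ S, H.neighborFinset w ⊆ Sᶜ := by
      intro w hw y hy
      rw [SimpleGraph.mem_neighborFinset] at hy
      exact Finset.mem_compl.mpr (hbipS hy hw)
    have htge : 2 ≤ #Sᶜ := by
      calc 2 ≤ H.degree s₀ := hdeg2 s₀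
        _ = #(H.neighborFinset s₀) := (SimpleGraph.card_neighborFinset_eq_degree _ _).symm
        _ ≤ #Sᶜ := Finset.card_le_card (hnbr_sub s₀ hs₀)
    have ht2 : #Sᶜ = 2 := le_antisymm htle htge
    have hdegS : ∀ w ∈ S, H.degree w = 2 := by
      intro w hw
      refine le_antisymm ?_ (hdeg2 w)
      calc H.degree w = #(H.neighborFinset w) := (SimpleGraph.card_neighborFinset_eq_degree _ _).symm
        _ ≤ #Sᶜ := Finset.card_le_card (hnbr_sub w hw)
        _ = 2 := ht2
    have heH2 : eH = 2 * #S := by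
      rw [← hsumS, Finset.sum_congr rfl hdegS, Finset.sum_const, smul_eq_mul, mul_comm]
    have hvHS : (vH:ℚ) - 2 = (#S:ℚ) := by
      have ht2Q : (#Sᶜ:ℚ) = 2 := by exact_mod_cast ht2
      linarith
    have heH2Q : (eH:ℚ) = 2 * (#S:ℚ) := by exact_mod_cast heH2
    have hsQ : (0:ℚ) ≤ (#S:ℚ) := Nat.cast_nonneg _
    have haQ2 : (2:ℚ) ≤ (aN:ℚ) := by exact_mod_cast haN2
    rw [hvHS] at hρeq'
    linarith [mul_le_mul_of_nonneg_right haQ2 hsQ, hρeq', heH2Q]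
  · -- ρ is not an integer: aN = bN
    have hba : bN = aN := by
      have h1 : (⌊ρ⌋:ℚ) < (⌈ρ⌉:ℚ) := by
        rw [← haQ]
        exact lt_of_lt_of_le hLt hclQ
      have h2 : ⌊ρ⌋ < ⌈ρ⌉ := by exact_mod_cast h1
      have h3 := Int.ceil_le_floor_add_one ρ
      omega
    rw [hba] at hMineq
    have hMQ : (eH:ℚ) + (aN:ℚ) + (aN:ℚ) ≤ (aN:ℚ) * (#S:ℚ) + (aN:ℚ) * (#Sᶜ:ℚ) + 1 := by
      exact_mod_cast hMineq
    have hkey : (aN:ℚ) * (vH:ℚ) = (aN:ℚ) * (#S:ℚ) + (aN:ℚ) * (#Sᶜ:ℚ) := by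
      rw [← hstQ]; ring
    have hfinal : ρ * ((vH:ℚ) - 2) ≤ (aN:ℚ) * ((vH:ℚ) - 2) := by
      nlinarith
    have : ρ ≤ (aN:ℚ) := le_of_mul_le_mul_right (by linarith) hv2
    linarith
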